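/- For all a > 0 and s > 0, ∫₀^∞ e^{−s t} · (a / (2 √π t^{3/2})) e^{−a²/(4t)} dt = e^{−a √s}. -/

import Mathlib

open MeasureTheory Real Filter Set Topology

noncomputable def psi (x : ℝ) : ℝ := ∫ u in (0:ℝ)..x, Real.exp (-u^2)

lemma contGauss : Continuous fun u : ℝ => Real.exp (-u^2) := by continuity

lemma intGauss : Integrable fun u : ℝ => Real.exp (-u^2) := by
  simpa using integrable_exp_neg_mul_sq (b := 1) one_pos

lemma hasDerivAt_psi (x : ℝ) : HasDerivAt psi (Real.exp (-x^2)) x :=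
  intervalIntegral.integral_hasDerivAt_right (contGauss.intervalIntegrable _ _)
    ⟨univ, univ_mem, contGauss.aestronglyMeasurable.restrict⟩ contGauss.continuousAt

lemma psi_top : Tendsto psi atTop (𝓝 (Real.sqrt π / 2)) := by
  have h := intervalIntegral_tendsto_integral_Ioi 0 intGauss.integrableOn tendsto_id
  have : ∫ x in Ioi (0:ℝ), Real.exp (-x^2) = Real.sqrt π / 2 := by
    simpa using integral_gaussian_Ioi 1
  rw [this] at h
  exact h

lemma psi_neg (x : ℝ) : psi (-x) = - psi x := by
  have h : (∫ u in (0:ℝ)..x, Real.exp (-(-u)^2)) = ∫ u in (-x)..(-(0:ℝ)), Real.exp (-u^2) :=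
    intervalIntegral.integral_comp_neg (fun u => Real.exp (-u^2))
  simp only [neg_neg, neg_sq, neg_zero] at h
  unfold psi
  rw [intervalIntegral.integral_symm, ← h]

lemma psi_bot : Tendsto psi atBot (𝓝 (-(Real.sqrt π / 2))) := by
  have h : Tendsto (fun x => psi (-x)) atTop (𝓝 (-(Real.sqrt π / 2))) := by
    simpa [psi_neg] using psi_top.neg
  have := h.comp (tendsto_neg_atBot_atTop)
  exact this.congr (fun x => by simp)

theorem stmt_3 (a s : ℝ) (ha : 0 < a) (hs : 0 < s) :
    ∫ t in Set.Ioi (0 : ℝ),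
        Real.exp (-s * t) * ((a / (2 * Real.sqrt Real.pi * t ^ ((3 : ℝ) / 2))) *
          Real.exp (-a ^ 2 / (4 * t))) =
      Real.exp (-a * Real.sqrt s) := by
  set sq := Real.sqrt s with hsqdef
  have hsq0 : 0 < sq := Real.sqrt_pos.2 hs
  have hs2 : sq ^ 2 = s := Real.sq_sqrt hs.le
  set sp := Real.sqrt π with hspdef
  have hsp0 : 0 < sp := Real.sqrt_pos.2 pi_pos
  set em := Real.exp (-(a * sq)) with hemdef
  set ea := Real.exp (a * sq) with headef
  have hprod : ea * em = 1 := by rw [headef, hemdef, ← Real.exp_add]; simp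
  set u : ℝ → ℝ := fun t => a / 2 * (Real.sqrt t)⁻¹ - sq * Real.sqrt t with hu
  set v : ℝ → ℝ := fun t => a / 2 * (Real.sqrt t)⁻¹ + sq * Real.sqrt t with hv
  set G : ℝ → ℝ := fun t => -(em / sp) * psi (u t) + -(ea / sp) * psi (v t) with hG
  set H0 : ℝ := -((em + ea) / 2) with hH0
  set H : ℝ → ℝ := fun t => if 0 < t then G t else H0 with hH
  set l : ℝ := em / 2 - ea / 2 with hl
  set f' : ℝ → ℝ := fun t =>
      Real.exp (-s * t) * ((a / (2 * sp * t ^ ((3 : ℝ) / 2))) * Real.exp (-a ^ 2 / (4 * t)))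
      with hf'
  have halg : ∀ E du dv : ℝ,
      -(em / sp) * (E * ea * du) + -(ea / sp) * (E * em * dv)
        = -(1 / sp) * (E * (du + dv)) := by
    intro E du dv
    have hme : em * ea = 1 := by rw [mul_comm]; exact hprod
    calc -(em / sp) * (E * ea * du) + -(ea / sp) * (E * em * dv)
        = -(1 / sp) * (E * du) * (em * ea) + -(1 / sp) * (E * dv) * (ea * em) := by ring
      _ = -(1 / sp) * (E * (du + dv)) := by rw [hme, hprod]; ring
  -- derivative of G on Ioi 0
  have hderivG : ∀ x ∈ Ioi (0:ℝ), HasDerivAt G (f' x) x := by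
    intro x hx
    obtain ⟨w, hw0, rfl⟩ : ∃ w : ℝ, 0 < w ∧ x = w ^ 2 :=
      ⟨Real.sqrt x, Real.sqrt_pos.2 hx, (Real.sq_sqrt (le_of_lt hx)).symm⟩
    have hws : Real.sqrt (w ^ 2) = w := Real.sqrt_sq hw0.le
    have hwne : w ≠ 0 := hw0.ne'
    have hsqrt : HasDerivAt Real.sqrt (1 / (2 * w)) (w ^ 2) := by
      have := Real.hasDerivAt_sqrt (x := w ^ 2) (by positivity)
      rwa [hws] at this
    have hinv : HasDerivAt (fun t => (Real.sqrt t)⁻¹)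
        (-(1 / (2 * w)) / w ^ 2) (w ^ 2) := by
      have := hsqrt.inv (by rw [hws]; exact hwne)
      rwa [hws] at this
    have hdu : HasDerivAt u
        (a / 2 * (-(1 / (2 * w)) / w ^ 2) - sq * (1 / (2 * w)))
        (w ^ 2) := (hinv.const_mul (a / 2)).sub (hsqrt.const_mul sq)
    have hdv : HasDerivAt v
        (a / 2 * (-(1 / (2 * w)) / w ^ 2) + sq * (1 / (2 * w)))
        (w ^ 2) := (hinv.const_mul (a / 2)).add (hsqrt.const_mul sq)
    have hpu := ((hasDerivAt_psi (u (w ^ 2))).comp (w ^ 2) hdu).const_mul (-(em / sp))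
    have hpv := ((hasDerivAt_psi (v (w ^ 2))).comp (w ^ 2) hdv).const_mul (-(ea / sp))
    have hsum := hpu.add hpv
    convert hsum using 1
    case e'_4 => rfl
    case e'_5 => rfl
    case e'_8 => rfl
    have h1 : Real.exp (-(u (w ^ 2)) ^ 2)
        = Real.exp (-s * w ^ 2) * Real.exp (-a ^ 2 / (4 * w ^ 2)) * ea := by
      rw [headef, ← Real.exp_add, ← Real.exp_add]
      congr 1
      simp only [hu, hws]
      rw [← hs2]
      field_simp
      ring
    have h2 : Real.exp (-(v (w ^ 2)) ^ 2)
        = Real.exp (-s * w ^ 2) * Real.exp (-a ^ 2 / (4 * w ^ 2)) * em := by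
      rw [hemdef, ← Real.exp_add, ← Real.exp_add]
      congr 1
      simp only [hv, hws]
      rw [← hs2]
      field_simp
      ring
    have hx32 : (w ^ 2) ^ ((3:ℝ)/2) = w ^ 2 * w := by
      have hx0 : (0:ℝ) < w ^ 2 := by positivity
      rw [show ((3:ℝ)/2) = 1 + 1/2 by norm_num, Real.rpow_add hx0, Real.rpow_one,
        ← Real.sqrt_eq_rpow, hws]
    rw [hf']
    simp only
    rw [hx32, h1, h2, halg]
    field_simp
    ring
  have hderivH : ∀ x ∈ Ioi (0:ℝ), HasDerivAt H (f' x) x := by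
    intro x hx
    have hev : H =ᶠ[𝓝 x] G := by
      filter_upwards [isOpen_Ioi.mem_nhds hx] with y hy
      simp [hH, if_pos (mem_Ioi.mp hy)]
    exact (hderivG x hx).congr_of_eventuallyEq hev
  -- limits of u, v
  have hsqrt0 : Tendsto Real.sqrt (𝓝[>] (0:ℝ)) (𝓝[>] (0:ℝ)) := by
    rw [tendsto_nhdsWithin_iff]
    constructor
    · have := (Real.continuous_sqrt.tendsto 0).mono_left (nhdsWithin_le_nhds (s := Ioi (0:ℝ)))
      simpa using this
    · filter_upwards [self_mem_nhdsWithin] with t ht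
      exact Real.sqrt_pos.2 ht
  have hsqrtTop : Tendsto Real.sqrt atTop atTop := by
    apply tendsto_atTop_atTop_of_monotone (fun x y h => Real.sqrt_le_sqrt h)
    intro b
    exact ⟨b ^ 2, by rw [Real.sqrt_sq_eq_abs]; exact le_abs_self b⟩
  have hinv0 : Tendsto (fun t => (Real.sqrt t)⁻¹) (𝓝[>] (0:ℝ)) atTop :=
    tendsto_inv_nhdsGT_zero.comp hsqrt0
  have h1 : Tendsto (fun t => a / 2 * (Real.sqrt t)⁻¹) (𝓝[>] (0:ℝ)) atTop :=
    hinv0.const_mul_atTop (by positivity)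
  have h2 : Tendsto (fun t => sq * Real.sqrt t) (𝓝[>] (0:ℝ)) (𝓝 0) := by
    have hq : Tendsto Real.sqrt (𝓝[>] (0:ℝ)) (𝓝 0) := hsqrt0.mono_right nhdsWithin_le_nhds
    simpa using hq.const_mul sq
  have hu0 : Tendsto u (𝓝[>] (0:ℝ)) atTop := by
    have := h1.atTop_add h2.neg
    simp only [hu, sub_eq_add_neg]
    exact this
  have hv0 : Tendsto v (𝓝[>] (0:ℝ)) atTop := h1.atTop_add h2
  have hA : Tendsto (fun t => a / 2 * (Real.sqrt t)⁻¹) atTop (𝓝 0) := by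
    have := (tendsto_inv_atTop_zero.comp hsqrtTop).const_mul (a / 2)
    simpa using this
  have hB : Tendsto (fun t => sq * Real.sqrt t) atTop atTop :=
    hsqrtTop.const_mul_atTop hsq0
  have huTop : Tendsto u atTop atBot := by
    have := hA.add_atBot (tendsto_neg_atTop_atBot.comp hB)
    simp only [hu, sub_eq_add_neg]
    exact this
  have hvTop : Tendsto v atTop atTop := hA.add_atTop hB
  have hGlim0 : Tendsto G (𝓝[>] (0:ℝ)) (𝓝 H0) := by
    have h := ((psi_top.comp hu0).const_mul (-(em / sp))).add
      ((psi_top.comp hv0).const_mul (-(ea / sp)))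
    have hval : -(em / sp) * (sp / 2) + -(ea / sp) * (sp / 2) = H0 := by
      rw [hH0]; field_simp; ring
    rw [← hval]
    exact h
  have hGlimTop : Tendsto G atTop (𝓝 l) := by
    have h := ((psi_bot.comp huTop).const_mul (-(em / sp))).add
      ((psi_top.comp hvTop).const_mul (-(ea / sp)))
    have hval : -(em / sp) * -(sp / 2) + -(ea / sp) * (sp / 2) = l := by
      rw [hl]; field_simp; ring
    rw [← hval]
    exact h
  have hH00 : H 0 = H0 := if_neg (lt_irrefl 0)
  have hcont : ContinuousWithinAt H (Ici (0:ℝ)) 0 := by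
    rw [ContinuousWithinAt, hH00]
    have hsplit : (Ici (0:ℝ)) = {0} ∪ Ioi 0 := by
      ext y; simp [le_iff_lt_or_eq, or_comm, eq_comm]
    rw [hsplit, nhdsWithin_union, tendsto_sup]
    constructor
    · rw [nhdsWithin_singleton]
      simpa [hH00] using tendsto_pure_nhds H 0
    · apply hGlim0.congr'
      filter_upwards [self_mem_nhdsWithin] with y hy
      simp [hH, if_pos (mem_Ioi.mp hy)]
  have htop : Tendsto H atTop (𝓝 l) := by
    apply hGlimTop.congr'
    filter_upwards [Ioi_mem_atTop (0:ℝ)] with y hy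
    simp [hH, if_pos (mem_Ioi.mp hy)]
  have hpos : ∀ x ∈ Ioi (0:ℝ), 0 ≤ f' x := by
    intro x hx
    have hx0 : (0:ℝ) < x := hx
    apply mul_nonneg (Real.exp_pos _).le
    apply mul_nonneg _ (Real.exp_pos _).le
    apply div_nonneg ha.le
    have : (0:ℝ) ≤ x ^ ((3:ℝ)/2) := Real.rpow_nonneg hx0.le _
    positivity
  have key := integral_Ioi_of_hasDerivAt_of_nonneg hcont hderivH hpos htop
  rw [key, hH00, hl, hH0, show -a * sq = -(a * sq) from neg_mul a sq, ← hemdef]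
  ring
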